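/- Fix an integer k ≥ 1. For every integer v ≥ 1, P(V(k) = v) = h_{v-k+1}·p^k, where the sequence (h_v)_{v∈ℤ} is defined by h_v = 0 for v ≤ 0, h_1 = 1, and h_v = q·∑_{i=1}^{k} p^{i-1}·h_{v-i} for v ≥ 2. -/

import Mathlib

open MeasureTheory Finset

/-- Waiting time for the first success run of length `k`: the smallest `n ≥ k` such that
trials `n - k + 1, …, n` are all successes (trials are indexed from `1`). -/
noncomputable def waitingTime (k : ℕ) (ω : ℕ → Bool) : ℕ :=
  sInf {n | k ≤ n ∧ ∀ i ∈ Finset.Icc (n - k + 1) n, ω i = true}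


namespace StmtAux

/-- weight of a single Bernoulli coordinate -/
def wt (p : ℝ) (b : Bool) : ℝ := if b = true then p else 1 - p

/-- cylinder set determined by coordinates 1..m -/
def Cyl (m : ℕ) (c : ℕ → Bool) : Set (ℕ → Bool) := {ω | ∀ i, 1 ≤ i → i ≤ m → ω i = c i}

/-- a set is determined by coordinates 1..m -/
def Det (m : ℕ) (E : Set (ℕ → Bool)) : Prop :=
  ∀ ω ω' : ℕ → Bool, (∀ i, 1 ≤ i → i ≤ m → ω i = ω' i) → (ω ∈ E ↔ ω' ∈ E)

/-- extend a finite pattern (index j ↦ coordinate j+1) to ℕ → Bool -/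
def ext' (m : ℕ) (b : Fin m → Bool) : ℕ → Bool :=
  fun i => if h : i - 1 < m then b ⟨i - 1, h⟩ else false

lemma ext'_spec (m : ℕ) (b : Fin m → Bool) (i : ℕ) (h1 : 1 ≤ i) (h2 : i ≤ m) :
    ext' m b i = b ⟨i - 1, by omega⟩ := by
  simp only [ext']
  rw [dif_pos (by omega)]

noncomputable def filt (m : ℕ) (E : Set (ℕ → Bool)) : Finset (Fin m → Bool) :=
  @Finset.filter _ (fun b => ext' m b ∈ E) (Classical.decPred _) Finset.univ

lemma mem_filt {m : ℕ} {E : Set (ℕ → Bool)} {b : Fin m → Bool} :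
    b ∈ filt m E ↔ ext' m b ∈ E := by
  classical
  simp [filt]

lemma cyl_meas (m : ℕ) (c : ℕ → Bool) : MeasurableSet (Cyl m c) := by
  have : Cyl m c = ⋂ i : ℕ, {ω : ℕ → Bool | 1 ≤ i → i ≤ m → ω i = c i} := by
    ext ω; simp [Cyl, Set.mem_iInter]
  rw [this]
  refine MeasurableSet.iInter fun i => ?_
  by_cases h1 : 1 ≤ i
  · by_cases h2 : i ≤ m
    · have : {ω : ℕ → Bool | 1 ≤ i → i ≤ m → ω i = c i}
          = (fun ω : ℕ → Bool => ω i) ⁻¹' {c i} := by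
        ext ω; simp [h1, h2]
      rw [this]
      exact (measurable_pi_apply i) (MeasurableSet.singleton _)
    · have : {ω : ℕ → Bool | 1 ≤ i → i ≤ m → ω i = c i} = Set.univ := by
        ext ω; simp [h2]
      rw [this]; exact MeasurableSet.univ
  · have : {ω : ℕ → Bool | 1 ≤ i → i ≤ m → ω i = c i} = Set.univ := by
      ext ω; simp [h1]
    rw [this]; exact MeasurableSet.univ

lemma decomp {m : ℕ} {E : Set (ℕ → Bool)} (hE : Det m E) :
    E = ⋃ b ∈ filt m E, Cyl m (ext' m b) := by
  ext ω
  constructor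
  · intro hω
    set b : Fin m → Bool := fun j => ω (j + 1) with hbdef
    have hagree : ∀ i, 1 ≤ i → i ≤ m → ω i = ext' m b i := by
      intro i h1 h2
      rw [ext'_spec _ _ i h1 h2]
      simp only [hbdef]
      congr 1
      omega
    simp only [Set.mem_iUnion, exists_prop]
    exact ⟨b, mem_filt.mpr ((hE ω _ hagree).mp hω), hagree⟩
  · intro hω
    simp only [Set.mem_iUnion, exists_prop] at hω
    rcases hω with ⟨b, hb, hωb⟩
    exact (hE ω (ext' m b) hωb).mpr (mem_filt.mp hb)

lemma cyl_disjoint {m : ℕ} {b b' : Fin m → Bool} (hbb : b ≠ b') :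
    Disjoint (Cyl m (ext' m b)) (Cyl m (ext' m b')) := by
  rw [Set.disjoint_left]
  intro ω hω hω'
  apply hbb
  funext j
  have h1 := hω (j + 1) (by omega) (by omega)
  have h2 := hω' (j + 1) (by omega) (by omega)
  rw [ext'_spec _ _ _ (by omega) (by omega)] at h1
  rw [ext'_spec _ _ _ (by omega) (by omega)] at h2
  have : (⟨j + 1 - 1, by omega⟩ : Fin m) = j := by
    apply Fin.ext; simp
  rw [this] at h1 h2
  rw [← h1, ← h2]

lemma det_measurable {m : ℕ} {E : Set (ℕ → Bool)} (hE : Det m E) : MeasurableSet E := by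
  rw [decomp hE]
  exact Finset.measurableSet_biUnion _ (fun b _ => cyl_meas m _)


lemma WT_eq_iff (k v : ℕ) (hv : 1 ≤ v) (ω : ℕ → Bool) :
    waitingTime k ω = v ↔
      ((k ≤ v ∧ ∀ i ∈ Finset.Icc (v - k + 1) v, ω i = true) ∧
        ∀ n, n < v → ¬(k ≤ n ∧ ∀ i ∈ Finset.Icc (n - k + 1) n, ω i = true)) := by
  set S : Set ℕ := {n | k ≤ n ∧ ∀ i ∈ Finset.Icc (n - k + 1) n, ω i = true} with hS
  have hWT : waitingTime k ω = sInf S := rfl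
  rw [hWT]
  constructor
  · intro h
    have hne : S.Nonempty := by
      by_contra hemp
      rw [Set.not_nonempty_iff_eq_empty] at hemp
      rw [hemp, Nat.sInf_empty] at h
      omega
    subst h
    exact ⟨Nat.sInf_mem hne, fun n hn hnS => Nat.notMem_of_lt_sInf hn hnS⟩
  · rintro ⟨hmem, hmin⟩
    have hmem' : v ∈ S := hmem
    refine le_antisymm (Nat.sInf_le hmem') ?_
    by_contra hlt
    push_neg at hlt
    exact hmin _ hlt (Nat.sInf_mem (⟨v, hmem'⟩ : S.Nonempty))

lemma run_shift (k i n : ℕ) (hn : k ≤ n) (ω : ℕ → Bool) :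
    (∀ j ∈ Finset.Icc (n + i - k + 1) (n + i), ω j = true) ↔
      (∀ j ∈ Finset.Icc (n - k + 1) n, (fun t => ω (t + i)) j = true) := by
  constructor
  · intro H j hj
    simp only [Finset.mem_Icc] at hj
    exact H (j + i) (by simp only [Finset.mem_Icc]; omega)
  · intro H j hj
    simp only [Finset.mem_Icc] at hj
    have := H (j - i) (by simp only [Finset.mem_Icc]; omega)
    simp only [] at this
    have hji : j - i + i = j := by omega
    rwa [hji] at this

lemma run_fail (k i n : ℕ) (hi1 : 1 ≤ i) (hin : i ≤ n) (hnk : n + 1 ≤ i + k)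
    (ω : ℕ → Bool) (hω : ω i = false) :
    ¬(∀ j ∈ Finset.Icc (n - k + 1) n, ω j = true) := by
  intro H
  have := H i (by simp only [Finset.mem_Icc]; omega)
  rw [hω] at this
  exact Bool.false_ne_true this

lemma event_decomp (k v : ℕ) (hk : 1 ≤ k) (hv : k + 1 ≤ v) :
    {ω : ℕ → Bool | waitingTime k ω = v} =
      ⋃ i ∈ Finset.Icc 1 k,
        {ω : ℕ → Bool | (∀ j, 1 ≤ j → j < i → ω j = true) ∧ ω i = false ∧
          (fun n => ω (n + i)) ∈ {ω' : ℕ → Bool | waitingTime k ω' = v - i}} := by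
  ext ω
  simp only [Set.mem_setOf_eq, Set.mem_iUnion, exists_prop]
  constructor
  · intro h
    rw [WT_eq_iff k v (by omega)] at h
    obtain ⟨⟨hkv, hrun⟩, hmin⟩ := h
    -- there is a false among the first k coordinates
    have hTne : ∃ j, 1 ≤ j ∧ j ≤ k ∧ ω j = false := by
      by_contra hall
      push_neg at hall
      refine hmin k (by omega) ⟨le_refl k, fun j hj => ?_⟩
      simp only [Finset.mem_Icc] at hj
      cases hb : ω j with
      | true => rfl
      | false => exact absurd hb (hall j (by omega) (by omega))
    set T : Set ℕ := {j | 1 ≤ j ∧ ω j = false} with hT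
    have hTne' : T.Nonempty := by
      obtain ⟨j, h1, h2, h3⟩ := hTne
      exact ⟨j, h1, h3⟩
    set i := sInf T with hidef
    have hiT : i ∈ T := Nat.sInf_mem hTne'
    have hi1 : 1 ≤ i := hiT.1
    have hifalse : ω i = false := hiT.2
    have hik : i ≤ k := by
      obtain ⟨j, h1, h2, h3⟩ := hTne
      exact le_trans (Nat.sInf_le ⟨h1, h3⟩) h2
    have hpre : ∀ j, 1 ≤ j → j < i → ω j = true := by
      intro j hj1 hj2
      have hnT : j ∉ T := Nat.notMem_of_lt_sInf hj2
      cases hb : ω j with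
      | true => rfl
      | false => exact absurd ⟨hj1, hb⟩ hnT
    -- v ≥ i + k
    have hvik : i + k ≤ v := by
      by_contra hcon
      push_neg at hcon
      exact run_fail k i v hi1 (by omega) (by omega) ω hifalse hrun
    refine ⟨i, by simp only [Finset.mem_Icc]; omega, hpre, hifalse, ?_⟩
    rw [WT_eq_iff k (v - i) (by omega)]
    refine ⟨⟨by omega, ?_⟩, ?_⟩
    · have := (run_shift k i (v - i) (by omega) ω).mp
      have hvi : v - i + i = v := by omega
      rw [hvi] at this
      exact this hrun
    · rintro n hn ⟨hkn, hrn⟩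
      refine hmin (n + i) (by omega) ⟨by omega, ?_⟩
      exact (run_shift k i n hkn ω).mpr hrn
  · rintro ⟨i, hi, hpre, hifalse, hshift⟩
    simp only [Finset.mem_Icc] at hi
    rw [WT_eq_iff k (v - i) (by omega)] at hshift
    obtain ⟨⟨hkvi, hrun⟩, hmin⟩ := hshift
    rw [WT_eq_iff k v (by omega)]
    refine ⟨⟨by omega, ?_⟩, ?_⟩
    · have := (run_shift k i (v - i) hkvi ω).mpr hrun
      have hvi : v - i + i = v := by omega
      rwa [hvi] at this
    · rintro n hn ⟨hkn, hrn⟩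
      by_cases hcase : n + 1 ≤ i + k
      · exact run_fail k i n hi.1 (by omega) hcase ω hifalse hrn
      · have h1 : k ≤ n - i := by omega
        have h2 : n - i + i = n := by omega
        have := (run_shift k i (n - i) h1 ω).mp (by rwa [h2])
        exact hmin (n - i) (by omega) ⟨h1, this⟩

lemma WT_empty (k m : ℕ) (hm1 : 1 ≤ m) (hmk : m < k) :
    {ω : ℕ → Bool | waitingTime k ω = m} = ∅ := by
  ext ω
  simp only [Set.mem_setOf_eq, Set.mem_empty_iff_false, iff_false]
  intro h
  rw [WT_eq_iff k m hm1] at h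
  omega

lemma WT_det (k m : ℕ) (hm : 1 ≤ m) : Det m {ω : ℕ → Bool | waitingTime k ω = m} := by
  by_cases hkm : k ≤ m
  · have aux : ∀ ω ω' : ℕ → Bool, (∀ i, 1 ≤ i → i ≤ m → ω i = ω' i) →
        waitingTime k ω = m → waitingTime k ω' = m := by
      intro ω ω' hag h
      rw [WT_eq_iff k m hm] at h ⊢
      obtain ⟨⟨h1, h2⟩, h3⟩ := h
      refine ⟨⟨h1, fun i hi => ?_⟩, ?_⟩
      · simp only [Finset.mem_Icc] at hi
        rw [← hag i (by omega) (by omega)]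
        exact h2 i (by simp only [Finset.mem_Icc]; omega)
      · rintro n hn ⟨hkn, hrn⟩
        refine h3 n hn ⟨hkn, fun i hi => ?_⟩
        simp only [Finset.mem_Icc] at hi
        rw [hag i (by omega) (by omega)]
        exact hrn i (by simp only [Finset.mem_Icc]; omega)
    intro ω ω' hag
    exact ⟨aux ω ω' hag, aux ω' ω (fun i h1 h2 => (hag i h1 h2).symm)⟩
  · intro ω ω' hag
    rw [WT_empty k m hm (by omega)]
    simp


end StmtAux


section
variable {p : ℝ} {μ : Measure (ℕ → Bool)}

open StmtAux in
lemma cyl_measure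
    (hμ : ∀ (n : ℕ) (b : ℕ → Bool),
      μ {ω | ∀ i, 1 ≤ i → i ≤ n → ω i = b i}
        = ENNReal.ofReal (∏ i ∈ Finset.Icc 1 n, if b i = true then p else 1 - p))
    (m : ℕ) (c : ℕ → Bool) :
    μ (Cyl m c) = ENNReal.ofReal (∏ i ∈ Finset.Icc 1 m, wt p (c i)) :=
  hμ m c

open StmtAux in
lemma measure_eq_sum
    (hμ : ∀ (n : ℕ) (b : ℕ → Bool),
      μ {ω | ∀ i, 1 ≤ i → i ≤ n → ω i = b i}
        = ENNReal.ofReal (∏ i ∈ Finset.Icc 1 n, if b i = true then p else 1 - p))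
    {m : ℕ} {E : Set (ℕ → Bool)} (hE : Det m E) :
    μ E = ∑ b ∈ filt m E, ENNReal.ofReal (∏ i ∈ Finset.Icc 1 m, wt p (ext' m b i)) := by
  conv_lhs => rw [decomp hE]
  rw [measure_biUnion_finset ?_ (fun b _ => cyl_meas m _)]
  · exact Finset.sum_congr rfl fun b _ => cyl_measure hμ m _
  · intro b hb b' hb' hbb
    exact cyl_disjoint hbb


open StmtAux in
lemma shift_measure (hp0 : 0 ≤ p) (hp1 : p ≤ 1)
    (hμ : ∀ (n : ℕ) (b : ℕ → Bool),
      μ {ω | ∀ i, 1 ≤ i → i ≤ n → ω i = b i}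
        = ENNReal.ofReal (∏ i ∈ Finset.Icc 1 n, if b i = true then p else 1 - p))
    (i m : ℕ) (hi : 1 ≤ i) {E : Set (ℕ → Bool)} (hE : Det m E) :
    μ {ω | (∀ j, 1 ≤ j → j < i → ω j = true) ∧ ω i = false ∧ (fun n => ω (n + i)) ∈ E}
      = ENNReal.ofReal (p ^ (i - 1) * (1 - p)) * μ E := by
  set F : Set (ℕ → Bool) :=
    {ω | (∀ j, 1 ≤ j → j < i → ω j = true) ∧ ω i = false ∧ (fun n => ω (n + i)) ∈ E} with hFdef
  have hF : Det (i + m) F := by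
    intro ω ω' hag
    have h1 : ∀ j, 1 ≤ j → j < i → (ω j = true ↔ ω' j = true) := by
      intro j hj1 hj2; rw [hag j hj1 (by omega)]
    have h2 : (ω i = false) ↔ (ω' i = false) := by rw [hag i hi (by omega)]
    have h3 : ((fun n => ω (n + i)) ∈ E) ↔ ((fun n => ω' (n + i)) ∈ E) := by
      apply hE
      intro n hn1 hn2
      exact hag (n + i) (by omega) (by omega)
    simp only [hFdef, Set.mem_setOf_eq]
    constructor
    · rintro ⟨a, b, c⟩
      exact ⟨fun j hj1 hj2 => (h1 j hj1 hj2).mp (a j hj1 hj2), h2.mp b, h3.mp c⟩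
    · rintro ⟨a, b, c⟩
      exact ⟨fun j hj1 hj2 => (h1 j hj1 hj2).mpr (a j hj1 hj2), h2.mpr b, h3.mpr c⟩
  -- the restriction and gluing maps
  set res : (Fin (i + m) → Bool) → (Fin m → Bool) :=
    fun b j => b ⟨j.val + i, by omega⟩ with hres
  set glue : (Fin m → Bool) → (Fin (i + m) → Bool) :=
    fun c j => if j.val + 1 < i then true else if j.val + 1 = i then false
      else if h : i ≤ j.val then c ⟨j.val - i, by omega⟩ else true with hglue
  have f1 : ∀ (b : Fin (i + m) → Bool) (ℓ : ℕ), 1 ≤ ℓ → ℓ ≤ m →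
      ext' m (res b) ℓ = ext' (i + m) b (ℓ + i) := by
    intro b ℓ h1 h2
    rw [ext'_spec _ _ _ h1 h2, ext'_spec _ _ _ (by omega) (by omega)]
    simp only [hres]
    congr 1
    apply Fin.eq_of_val_eq
    simp only [Fin.val_mk]
    omega
  have memF : ∀ b : Fin (i + m) → Bool, ext' (i + m) b ∈ F →
      ((∀ j, 1 ≤ j → j < i → ext' (i + m) b j = true) ∧ ext' (i + m) b i = false ∧
        (fun n => ext' (i + m) b (n + i)) ∈ E) := fun b hb => hb
  have fwd : ∀ b ∈ filt (i + m) F, res b ∈ filt m E := by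
    intro b hb
    obtain ⟨_, _, h3⟩ := memF b (mem_filt.mp hb)
    rw [mem_filt]
    refine (hE _ _ ?_).mpr h3
    intro ℓ h1 h2
    exact f1 b ℓ h1 h2
  have bwd : ∀ c ∈ filt m E, glue c ∈ filt (i + m) F := by
    intro c hc
    rw [mem_filt] at hc ⊢
    refine ⟨?_, ?_, ?_⟩
    · intro j hj1 hj2
      rw [ext'_spec _ _ _ hj1 (by omega)]
      simp only [hglue]
      rw [if_pos (show (⟨j - 1, by omega⟩ : Fin (i + m)).val + 1 < i by
        simp only [Fin.val_mk]; omega)]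
    · rw [ext'_spec _ _ _ hi (by omega)]
      simp only [hglue]
      rw [if_neg (show ¬((⟨i - 1, by omega⟩ : Fin (i + m)).val + 1 < i) by
          simp only [Fin.val_mk]; omega),
        if_pos (show (⟨i - 1, by omega⟩ : Fin (i + m)).val + 1 = i by
          simp only [Fin.val_mk]; omega)]
    · refine (hE _ _ ?_).mpr hc
      intro n hn1 hn2
      rw [ext'_spec _ _ _ (by omega) (by omega), ext'_spec _ _ _ hn1 hn2]
      simp only [hglue]
      rw [if_neg (show ¬((⟨n + i - 1, by omega⟩ : Fin (i + m)).val + 1 < i) by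
          simp only [Fin.val_mk]; omega),
        if_neg (show ¬((⟨n + i - 1, by omega⟩ : Fin (i + m)).val + 1 = i) by
          simp only [Fin.val_mk]; omega),
        dif_pos (show i ≤ (⟨n + i - 1, by omega⟩ : Fin (i + m)).val by
          simp only [Fin.val_mk]; omega)]
      congr 1
      apply Fin.eq_of_val_eq
      simp only [Fin.val_mk]
      omega
  have linv : ∀ b ∈ filt (i + m) F, glue (res b) = b := by
    intro b hb
    obtain ⟨h1, h2, _⟩ := memF b (mem_filt.mp hb)
    funext j
    simp only [hglue, hres]
    by_cases c1 : j.val + 1 < i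
    · rw [if_pos c1]
      have := h1 (j.val + 1) (by omega) c1
      rw [ext'_spec _ _ _ (by omega) (by omega)] at this
      have hj : (⟨j.val + 1 - 1, by omega⟩ : Fin (i + m)) = j := by
        apply Fin.eq_of_val_eq; simp only [Fin.val_mk]; omega
      rw [hj] at this
      exact this.symm
    · by_cases c2 : j.val + 1 = i
      · rw [if_neg c1, if_pos c2]
        rw [ext'_spec _ _ _ hi (by omega)] at h2
        have hj : (⟨i - 1, by omega⟩ : Fin (i + m)) = j := by
          apply Fin.eq_of_val_eq; simp only [Fin.val_mk]; omega
        rw [hj] at h2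
        exact h2.symm
      · rw [if_neg c1, if_neg c2, dif_pos (show i ≤ j.val by omega)]
        congr 1
        apply Fin.eq_of_val_eq
        simp only [Fin.val_mk]
        omega
  have rinv : ∀ c ∈ filt m E, res (glue c) = c := by
    intro c _
    funext j
    simp only [hres, hglue]
    rw [if_neg (show ¬((⟨j.val + i, by omega⟩ : Fin (i + m)).val + 1 < i) by
        simp only [Fin.val_mk]; omega),
      if_neg (show ¬((⟨j.val + i, by omega⟩ : Fin (i + m)).val + 1 = i) by
        simp only [Fin.val_mk]; omega),
      dif_pos (show i ≤ (⟨j.val + i, by omega⟩ : Fin (i + m)).val by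
        simp only [Fin.val_mk]; omega)]
    congr 1
    apply Fin.eq_of_val_eq
    simp only [Fin.val_mk]
    omega
  have prodid : ∀ b ∈ filt (i + m) F,
      (∏ ℓ ∈ Finset.Icc 1 (i + m), wt p (ext' (i + m) b ℓ))
        = p ^ (i - 1) * (1 - p) * ∏ ℓ ∈ Finset.Icc 1 m, wt p (ext' m (res b) ℓ) := by
    intro b hb
    obtain ⟨h1, h2, _⟩ := memF b (mem_filt.mp hb)
    have split : Finset.Icc 1 (i + m) = Finset.Ioc 0 (i + m) := by
      rw [← Finset.Icc_add_one_left_eq_Ioc, zero_add]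
    have split2 : Finset.Icc 1 i = Finset.Ioc 0 i := by
      rw [← Finset.Icc_add_one_left_eq_Ioc, zero_add]
    rw [split, ← Finset.prod_Ioc_consecutive _ (Nat.zero_le i) (by omega : i ≤ i + m),
      ← split2]
    have part1 : (∏ ℓ ∈ Finset.Icc 1 i, wt p (ext' (i + m) b ℓ)) = p ^ (i - 1) * (1 - p) := by
      obtain ⟨i', rfl⟩ : ∃ i', i = i' + 1 := ⟨i - 1, by omega⟩
      rw [Finset.prod_Icc_succ_top (by omega)]
      have e : ∀ ℓ ∈ Finset.Icc 1 i', wt p (ext' (i' + 1 + m) b ℓ) = p := by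
        intro ℓ hℓ
        simp only [Finset.mem_Icc] at hℓ
        rw [h1 ℓ (by omega) (by omega)]
        simp [wt]
      rw [Finset.prod_congr rfl e, Finset.prod_const, Nat.card_Icc, h2]
      simp [wt]
    have part2 : (∏ ℓ ∈ Finset.Ioc i (i + m), wt p (ext' (i + m) b ℓ))
        = ∏ ℓ ∈ Finset.Icc 1 m, wt p (ext' m (res b) ℓ) := by
      refine Finset.prod_nbij' (fun ℓ => ℓ - i) (fun n => n + i) ?_ ?_ ?_ ?_ ?_
      · intro a ha; simp only [Finset.mem_Ioc] at ha; simp only [Finset.mem_Icc]; omega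
      · intro a ha; simp only [Finset.mem_Icc] at ha; simp only [Finset.mem_Ioc]; omega
      · intro a ha; simp only [Finset.mem_Ioc] at ha; show a - i + i = a; omega
      · intro a ha; simp only [Finset.mem_Icc] at ha; show a + i - i = a; omega
      · intro a ha
        simp only [Finset.mem_Ioc] at ha
        show wt p (ext' (i + m) b a) = wt p (ext' m (res b) (a - i))
        rw [f1 b (a - i) (by omega) (by omega)]
        have : a - i + i = a := by omega
        rw [this]
    rw [part1, part2]
  -- now compute
  rw [measure_eq_sum hμ hF, measure_eq_sum hμ hE, Finset.mul_sum]
  refine Finset.sum_nbij' res glue fwd bwd linv rinv ?_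
  intro b hb
  rw [prodid b hb, ← ENNReal.ofReal_mul
    (mul_nonneg (pow_nonneg hp0 _) (by linarith))]


open StmtAux in
lemma det_shift (i m : ℕ) (hi : 1 ≤ i) {E : Set (ℕ → Bool)} (hE : Det m E) :
    Det (i + m)
      {ω : ℕ → Bool | (∀ j, 1 ≤ j → j < i → ω j = true) ∧ ω i = false ∧
        (fun n => ω (n + i)) ∈ E} := by
  intro ω ω' hag
  have h1 : ∀ j, 1 ≤ j → j < i → (ω j = true ↔ ω' j = true) := by
    intro j hj1 hj2; rw [hag j hj1 (by omega)]
  have h2 : (ω i = false) ↔ (ω' i = false) := by rw [hag i hi (by omega)]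
  have h3 : ((fun n => ω (n + i)) ∈ E) ↔ ((fun n => ω' (n + i)) ∈ E) := by
    apply hE
    intro n hn1 hn2
    exact hag (n + i) (by omega) (by omega)
  simp only [Set.mem_setOf_eq]
  constructor
  · rintro ⟨a, b, c⟩
    exact ⟨fun j hj1 hj2 => (h1 j hj1 hj2).mp (a j hj1 hj2), h2.mp b, h3.mp c⟩
  · rintro ⟨a, b, c⟩
    exact ⟨fun j hj1 hj2 => (h1 j hj1 hj2).mpr (a j hj1 hj2), h2.mpr b, h3.mpr c⟩

open StmtAux in
lemma measure_rec (hp0 : 0 ≤ p) (hp1 : p ≤ 1)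
    (hμ : ∀ (n : ℕ) (b : ℕ → Bool),
      μ {ω | ∀ i, 1 ≤ i → i ≤ n → ω i = b i}
        = ENNReal.ofReal (∏ i ∈ Finset.Icc 1 n, if b i = true then p else 1 - p))
    (k v : ℕ) (hk : 1 ≤ k) (hv : k + 1 ≤ v) :
    μ {ω : ℕ → Bool | waitingTime k ω = v}
      = ∑ i ∈ Finset.Icc 1 k, ENNReal.ofReal (p ^ (i - 1) * (1 - p)) *
          μ {ω : ℕ → Bool | waitingTime k ω = v - i} := by
  rw [event_decomp k v hk hv]
  have key : ∀ i j : ℕ, 1 ≤ i → i < j →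
      Disjoint
        {ω : ℕ → Bool | (∀ l, 1 ≤ l → l < i → ω l = true) ∧ ω i = false ∧
          (fun n => ω (n + i)) ∈ {ω' : ℕ → Bool | waitingTime k ω' = v - i}}
        {ω : ℕ → Bool | (∀ l, 1 ≤ l → l < j → ω l = true) ∧ ω j = false ∧
          (fun n => ω (n + j)) ∈ {ω' : ℕ → Bool | waitingTime k ω' = v - j}} := by
    intro i j hi hij
    rw [Set.disjoint_left]
    rintro ω ⟨_, hfalse, _⟩ ⟨hpre, _, _⟩
    have := hpre i hi hij
    rw [hfalse] at this
    exact Bool.false_ne_true this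
  have hdisj : (↑(Finset.Icc 1 k) : Set ℕ).PairwiseDisjoint
      (fun i => {ω : ℕ → Bool | (∀ l, 1 ≤ l → l < i → ω l = true) ∧ ω i = false ∧
        (fun n => ω (n + i)) ∈ {ω' : ℕ → Bool | waitingTime k ω' = v - i}}) := by
    intro i hi j hj hne
    simp only [Finset.coe_Icc, Set.mem_Icc] at hi hj
    rcases lt_or_gt_of_ne hne with hlt | hgt
    · exact key i j hi.1 hlt
    · exact (key j i hj.1 hgt).symm
  rw [measure_biUnion_finset hdisj (fun i hi => ?_)]
  · refine Finset.sum_congr rfl fun i hi => ?_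
    simp only [Finset.mem_Icc] at hi
    exact shift_measure hp0 hp1 hμ i (v - i) hi.1 (WT_det k (v - i) (by omega))
  · simp only [Finset.mem_Icc] at hi
    exact det_measurable (det_shift i (v - i) hi.1 (WT_det k (v - i) (by omega)))

open StmtAux in
lemma measure_base
    (hμ : ∀ (n : ℕ) (b : ℕ → Bool),
      μ {ω | ∀ i, 1 ≤ i → i ≤ n → ω i = b i}
        = ENNReal.ofReal (∏ i ∈ Finset.Icc 1 n, if b i = true then p else 1 - p))
    (k : ℕ) (hk : 1 ≤ k) :
    μ {ω : ℕ → Bool | waitingTime k ω = k} = ENNReal.ofReal (p ^ k) := by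
  have hset : {ω : ℕ → Bool | waitingTime k ω = k}
      = {ω : ℕ → Bool | ∀ i, 1 ≤ i → i ≤ k → ω i = (fun _ => true) i} := by
    ext ω
    simp only [Set.mem_setOf_eq]
    rw [WT_eq_iff k k hk]
    constructor
    · rintro ⟨⟨_, hrun⟩, _⟩ i h1 h2
      exact hrun i (by simp only [Finset.mem_Icc]; omega)
    · intro hall
      refine ⟨⟨le_refl k, fun i hi => ?_⟩, ?_⟩
      · simp only [Finset.mem_Icc] at hi
        exact hall i (by omega) (by omega)
      · rintro n hn ⟨hkn, _⟩
        omega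
  rw [hset, hμ k (fun _ => true)]
  congr 1
  rw [Finset.prod_congr rfl (fun i _ => if_pos rfl), Finset.prod_const, Nat.card_Icc]
  norm_num

end

open StmtAux in
theorem stmt1 (p : ℝ) (hp0 : 0 < p) (hp1 : p < 1) (k : ℕ) (hk : 1 ≤ k)
    (μ : Measure (ℕ → Bool)) [IsProbabilityMeasure μ]
    (hμ : ∀ (n : ℕ) (b : ℕ → Bool),
      μ {ω | ∀ i, 1 ≤ i → i ≤ n → ω i = b i}
        = ENNReal.ofReal (∏ i ∈ Finset.Icc 1 n, if b i = true then p else 1 - p))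
    (h : ℤ → ℝ) (h0 : ∀ v : ℤ, v ≤ 0 → h v = 0) (h1 : h 1 = 1)
    (hrec : ∀ v : ℤ, 2 ≤ v →
      h v = (1 - p) * ∑ i ∈ Finset.Icc 1 k, p ^ (i - 1) * h (v - i)) :
    ∀ v : ℕ, 1 ≤ v →
      (μ {ω | waitingTime k ω = v}).toReal = h ((v : ℤ) - k + 1) * p ^ k := by
  have hp0' : 0 ≤ p := hp0.le
  have hp1' : p ≤ 1 := hp1.le
  have hrec' : ∀ v : ℕ, k + 1 ≤ v → (μ {ω | waitingTime k ω = v}).toReal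
      = ∑ i ∈ Finset.Icc 1 k,
          p ^ (i - 1) * (1 - p) * (μ {ω | waitingTime k ω = v - i}).toReal := by
    intro v hv
    rw [measure_rec hp0' hp1' hμ k v hk hv, ENNReal.toReal_sum (fun i _ =>
      ENNReal.mul_ne_top ENNReal.ofReal_ne_top (measure_ne_top μ _))]
    refine Finset.sum_congr rfl fun i hi => ?_
    rw [ENNReal.toReal_mul,
      ENNReal.toReal_ofReal (mul_nonneg (pow_nonneg hp0' _) (by linarith))]
  intro v
  induction v using Nat.strong_induction_on with
  | _ v ih =>
    intro hv1
    rcases lt_trichotomy v k with hlt | heq | hgt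
    · rw [WT_empty k v hv1 hlt]
      simp only [measure_empty, ENNReal.toReal_zero]
      rw [h0 ((v : ℤ) - k + 1) (by omega)]
      ring
    · subst heq
      rw [measure_base hμ v hk, ENNReal.toReal_ofReal (pow_nonneg hp0' v)]
      have harg : (v : ℤ) - v + 1 = 1 := by ring
      rw [harg, h1, one_mul]
    · have hv : k + 1 ≤ v := hgt
      rw [hrec' v hv]
      have hstep : ∀ i ∈ Finset.Icc 1 k,
          p ^ (i - 1) * (1 - p) * (μ {ω | waitingTime k ω = v - i}).toReal
            = p ^ (i - 1) * (1 - p) * (h ((v : ℤ) - k + 1 - i) * p ^ k) := by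
        intro i hi
        simp only [Finset.mem_Icc] at hi
        rw [ih (v - i) (by omega) (by omega)]
        have harg : ((v - i : ℕ) : ℤ) - k + 1 = (v : ℤ) - k + 1 - i := by omega
        rw [harg]
      rw [Finset.sum_congr rfl hstep, hrec ((v : ℤ) - k + 1) (by omega),
        Finset.mul_sum, Finset.sum_mul]
      refine Finset.sum_congr rfl fun i hi => ?_
      ring
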